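/- Let (p_1,...,p_m) and (q_1,...,q_n) be probability distributions with all entries positive, and let R ∈ (0,1] be such that for all t ∈ (0,1): (Σ_i p_i^{1/(1-t)})^{(1-t)/t} · (Σ_j q_j^{1/(1+t)})^{-(1+t)/t} ≤ R². Then -Σ_i p_i log p_i - Σ_j q_j log q_j ≥ -2 log R. -/

import Mathlib

open Real Filter Set Topology

-- derivative of t ↦ log (∑ p i ^ (1/(1-t))) at 0
lemma phi_deriv {m : ℕ} (p : Fin m → ℝ) (hp : ∀ i, 0 < p i) (hpsum : ∑ i, p i = 1) :
    HasDerivAt (fun t : ℝ => Real.log (∑ i, p i ^ (1 / (1 - t))))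
      (∑ i, p i * Real.log (p i)) 0 := by
  have hc : HasDerivAt (fun t : ℝ => 1 / (1 - t)) 1 0 := by
    have h1 : HasDerivAt (fun t : ℝ => 1 - t) (-1) 0 := (hasDerivAt_id 0).const_sub 1
    have h2 := h1.fun_inv (by norm_num)
    simpa [one_div] using h2.congr_deriv (by norm_num)
  have hsum : HasDerivAt (fun t : ℝ => ∑ i, p i ^ (1 / (1 - t)))
      (∑ i, p i * Real.log (p i)) 0 := by
    have := HasDerivAt.fun_sum (x := (0:ℝ)) (u := Finset.univ)
      (A := fun i (t : ℝ) => p i ^ (1 / (1 - t)))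
      (A' := fun i => p i * Real.log (p i)) ?_
    · exact this
    · intro i _
      have hb : HasDerivAt (fun s : ℝ => p i ^ s)
          (p i ^ (1 / (1 - (0:ℝ))) * Real.log (p i)) (1 / (1 - (0:ℝ))) :=
        (Real.hasStrictDerivAt_const_rpow (hp i) _).hasDerivAt
      have := hb.comp 0 hc
      simp only [mul_one] at this
      convert! this using 1
      norm_num [Real.rpow_one]
  have hne : (∑ i, p i ^ (1 / (1 - (0:ℝ)))) ≠ 0 := by
    norm_num [Real.rpow_one, hpsum]
  have := hsum.log hne
  convert this using 1
  norm_num [Real.rpow_one, hpsum]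

lemma psi_deriv {n : ℕ} (q : Fin n → ℝ) (hq : ∀ j, 0 < q j) (hqsum : ∑ j, q j = 1) :
    HasDerivAt (fun t : ℝ => Real.log (∑ j, q j ^ (1 / (1 + t))))
      (-∑ j, q j * Real.log (q j)) 0 := by
  have hc : HasDerivAt (fun t : ℝ => 1 / (1 + t)) (-1) 0 := by
    have h1 : HasDerivAt (fun t : ℝ => 1 + t) 1 0 := (hasDerivAt_id 0).const_add 1
    have h2 := h1.fun_inv (by norm_num)
    simpa [one_div] using h2.congr_deriv (by norm_num)
  have hsum : HasDerivAt (fun t : ℝ => ∑ j, q j ^ (1 / (1 + t)))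
      (-∑ j, q j * Real.log (q j)) 0 := by
    have := HasDerivAt.fun_sum (x := (0:ℝ)) (u := Finset.univ)
      (A := fun j (t : ℝ) => q j ^ (1 / (1 + t)))
      (A' := fun j => -(q j * Real.log (q j))) ?_
    · simpa [Finset.sum_neg_distrib] using this
    · intro j _
      have hb : HasDerivAt (fun s : ℝ => q j ^ s)
          (q j ^ (1 / (1 + (0:ℝ))) * Real.log (q j)) (1 / (1 + (0:ℝ))) :=
        (Real.hasStrictDerivAt_const_rpow (hq j) _).hasDerivAt
      have := hb.comp 0 hc
      convert! this using 1
      norm_num [Real.rpow_one]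
  have hne : (∑ j, q j ^ (1 / (1 + (0:ℝ)))) ≠ 0 := by
    norm_num [Real.rpow_one, hqsum]
  have := hsum.log hne
  convert this using 1
  norm_num [Real.rpow_one, hqsum]

theorem entropy_bound_from_limit
    {m n : ℕ} (p : Fin m → ℝ) (q : Fin n → ℝ)
    (hp : ∀ i, 0 < p i) (hq : ∀ j, 0 < q j)
    (hpsum : ∑ i, p i = 1) (hqsum : ∑ j, q j = 1)
    (R : ℝ) (hR : R ∈ Set.Ioc (0 : ℝ) 1)
    (h : ∀ t ∈ Set.Ioo (0 : ℝ) 1,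
      (∑ i, p i ^ (1 / (1 - t))) ^ ((1 - t) / t) *
        (∑ j, q j ^ (1 / (1 + t))) ^ (-((1 + t) / t)) ≤ R ^ 2) :
    (-∑ i, p i * Real.log (p i)) + (-∑ j, q j * Real.log (q j)) ≥ -2 * Real.log R := by
  set φ : ℝ → ℝ := fun t => Real.log (∑ i, p i ^ (1 / (1 - t))) with hφdef
  set ψ : ℝ → ℝ := fun t => Real.log (∑ j, q j ^ (1 / (1 + t))) with hψdef
  have hφ0 : φ 0 = 0 := by simp [hφdef, Real.rpow_one, hpsum]
  have hψ0 : ψ 0 = 0 := by simp [hψdef, Real.rpow_one, hqsum]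
  -- slope limits
  have hφt : Tendsto (fun t => φ t / t) (𝓝[>] (0:ℝ)) (𝓝 (∑ i, p i * Real.log (p i))) := by
    have := (hasDerivAt_iff_tendsto_slope.mp (phi_deriv p hp hpsum)).mono_left
      (nhdsWithin_mono _ (by intro x hx; exact ne_of_gt hx))
    refine this.congr' ?_
    filter_upwards [self_mem_nhdsWithin] with t ht
    simp [slope, hφdef, hpsum, one_div, div_eq_inv_mul]
  have hψt : Tendsto (fun t => ψ t / t) (𝓝[>] (0:ℝ)) (𝓝 (-∑ j, q j * Real.log (q j))) := by
    have := (hasDerivAt_iff_tendsto_slope.mp (psi_deriv q hq hqsum)).mono_left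
      (nhdsWithin_mono _ (by intro x hx; exact ne_of_gt hx))
    refine this.congr' ?_
    filter_upwards [self_mem_nhdsWithin] with t ht
    simp [slope, hψdef, hqsum, one_div, div_eq_inv_mul]
  -- combined limit
  have h1t : Tendsto (fun t : ℝ => 1 - t) (𝓝[>] (0:ℝ)) (𝓝 1) := by
    have : Tendsto (fun t : ℝ => 1 - t) (𝓝 (0:ℝ)) (𝓝 1) := by
      simpa using (continuous_const.fun_sub continuous_id).tendsto (0:ℝ)
    exact this.mono_left nhdsWithin_le_nhds
  have h2t : Tendsto (fun t : ℝ => 1 + t) (𝓝[>] (0:ℝ)) (𝓝 1) := by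
    have : Tendsto (fun t : ℝ => 1 + t) (𝓝 (0:ℝ)) (𝓝 1) := by
      simpa using (continuous_const.fun_add continuous_id).tendsto (0:ℝ)
    exact this.mono_left nhdsWithin_le_nhds
  have hg : Tendsto (fun t => (1 - t) * (φ t / t) - (1 + t) * (ψ t / t)) (𝓝[>] (0:ℝ))
      (𝓝 ((∑ i, p i * Real.log (p i)) + (∑ j, q j * Real.log (q j)))) := by
    have := (h1t.mul hφt).sub (h2t.mul hψt)
    simpa [sub_neg_eq_add] using this
  -- bound on (0,1)
  have hbound : ∀ᶠ t in 𝓝[>] (0:ℝ),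
      (1 - t) * (φ t / t) - (1 + t) * (ψ t / t) ≤ 2 * Real.log R := by
    filter_upwards [Ioo_mem_nhdsGT_of_mem (by norm_num : (0:ℝ) ∈ Ico (0:ℝ) 1)] with t ht
    have ht0 : 0 < t := ht.1
    have hA : 0 < ∑ i, p i ^ (1 / (1 - t)) := by
      have : m ≠ 0 := by rintro rfl; simp at hpsum
      obtain ⟨i⟩ := Fin.pos_iff_nonempty.mp (Nat.pos_of_ne_zero this)
      exact Finset.sum_pos (fun i _ => Real.rpow_pos_of_pos (hp i) _) ⟨i, Finset.mem_univ i⟩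
    have hB : 0 < ∑ j, q j ^ (1 / (1 + t)) := by
      have : n ≠ 0 := by rintro rfl; simp at hqsum
      obtain ⟨j⟩ := Fin.pos_iff_nonempty.mp (Nat.pos_of_ne_zero this)
      exact Finset.sum_pos (fun j _ => Real.rpow_pos_of_pos (hq j) _) ⟨j, Finset.mem_univ j⟩
    have hle := h t ht
    have hpos : 0 < (∑ i, p i ^ (1 / (1 - t))) ^ ((1 - t) / t) *
        (∑ j, q j ^ (1 / (1 + t))) ^ (-((1 + t) / t)) :=
      mul_pos (Real.rpow_pos_of_pos hA _) (Real.rpow_pos_of_pos hB _)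
    have hlog := Real.log_le_log hpos hle
    rw [Real.log_mul (ne_of_gt (Real.rpow_pos_of_pos hA _)) (ne_of_gt (Real.rpow_pos_of_pos hB _)),
      Real.log_rpow hA, Real.log_rpow hB, Real.log_pow] at hlog
    have : (1 - t) / t * φ t + -((1 + t) / t) * ψ t ≤ 2 * Real.log R := by
      simpa [hφdef, hψdef] using hlog
    calc (1 - t) * (φ t / t) - (1 + t) * (ψ t / t)
        = (1 - t) / t * φ t + -((1 + t) / t) * ψ t := by ring
      _ ≤ 2 * Real.log R := this
  have hlim : (∑ i, p i * Real.log (p i)) + (∑ j, q j * Real.log (q j)) ≤ 2 * Real.log R :=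
    le_of_tendsto hg hbound
  linarith
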